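/- Given a left dilation (v_t : L ⊗ E_t → L) and a right dilation (w_t : E_t ⊗ R → R) of the same product system of Hilbert spaces E^⊗, the operators u_t := (v_t ⊗ id_R)(id_L ⊗ w_t*) on L ⊗ R form a one-parameter group of unitaries: u_s u_t = u_{s+t} and u_0 = id. -/

import Mathlib

open scoped InnerProductSpace NNReal
set_option synthInstance.maxHeartbeats 1000000
set_option maxHeartbeats 1000000

section Aux

lemma aux_norm_eq' {A B K : Type*} [NormedAddCommGroup A] [InnerProductSpace ℂ A]
    [NormedAddCommGroup B] [InnerProductSpace ℂ B]
    [NormedAddCommGroup K] [InnerProductSpace ℂ K]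
    (f : A → B → K)
    (hiso : ∀ x x' z z', ⟪f x z, f x' z'⟫_ℂ = ⟪x, x'⟫_ℂ * ⟪z, z'⟫_ℂ)
    (x : A) (z : B) : ‖f x z‖ = ‖x‖ * ‖z‖ := by
  have h := hiso x x z z
  rw [inner_self_eq_norm_sq_to_K, inner_self_eq_norm_sq_to_K, inner_self_eq_norm_sq_to_K] at h
  have h2 : ‖f x z‖ ^ 2 = (‖x‖ * ‖z‖) ^ 2 := by
    have : ((‖f x z‖ ^ 2 : ℝ) : ℂ) = (((‖x‖ * ‖z‖) ^ 2 : ℝ) : ℂ) := by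
      push_cast; rw [mul_pow]; exact h
    exact_mod_cast this
  nlinarith [norm_nonneg (f x z), mul_nonneg (norm_nonneg x) (norm_nonneg z)]

lemma aux_span_univ_dense' {X : Type*} [NormedAddCommGroup X] [InnerProductSpace ℂ X] :
    Dense ((Submodule.span ℂ (Set.univ : Set X) : Submodule ℂ X) : Set X) := by
  rw [Submodule.span_univ, Submodule.top_coe]
  exact dense_univ

/-- If `f : A → B → K` is bilinear with the tensor inner product formula, the span of
elementary products is dense, and `SA, SB` have dense spans, then the span of
`f x z`, `x ∈ SA`, `z ∈ SB`, is dense. -/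
lemma aux_dense' {A B K : Type*} [NormedAddCommGroup A] [InnerProductSpace ℂ A]
    [NormedAddCommGroup B] [InnerProductSpace ℂ B]
    [NormedAddCommGroup K] [InnerProductSpace ℂ K]
    (f : A → B → K)
    (hlin : ∀ x, IsLinearMap ℂ (f x)) (hlin' : ∀ z, IsLinearMap ℂ (fun x => f x z))
    (hiso : ∀ x x' z z', ⟪f x z, f x' z'⟫_ℂ = ⟪x, x'⟫_ℂ * ⟪z, z'⟫_ℂ)
    (SA : Set A) (SB : Set B)
    (hSA : Dense ((Submodule.span ℂ SA : Submodule ℂ A) : Set A))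
    (hSB : Dense ((Submodule.span ℂ SB : Submodule ℂ B) : Set B))
    (hd : Dense ((Submodule.span ℂ {k : K | ∃ x z, f x z = k}) : Set K)) :
    Dense ((Submodule.span ℂ {k : K | ∃ x ∈ SA, ∃ z ∈ SB, f x z = k}) : Set K) := by
  set M := Submodule.span ℂ {k : K | ∃ x ∈ SA, ∃ z ∈ SB, f x z = k} with hM
  set fL : A → B →L[ℂ] K := fun x =>
    LinearMap.mkContinuous (IsLinearMap.mk' (f x) (hlin x)) ‖x‖
      (fun z => le_of_eq (aux_norm_eq' f hiso x z)) with hfL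
  set fR : B → A →L[ℂ] K := fun z =>
    LinearMap.mkContinuous (IsLinearMap.mk' (fun x => f x z) (hlin' z)) ‖z‖
      (fun x => le_of_eq (by show ‖f x z‖ = ‖z‖ * ‖x‖; rw [aux_norm_eq' f hiso x z]; ring))
      with hfR
  have step1 : ∀ x ∈ SA, ∀ z, f x z ∈ M.topologicalClosure := by
    intro x hx z
    have hz : z ∈ closure ((Submodule.span ℂ SB : Submodule ℂ B) : Set B) := hSB z
    have hmaps : Set.MapsTo (fL x) ((Submodule.span ℂ SB : Submodule ℂ B) : Set B)
        (M : Set K) := by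
      intro b hb
      rw [SetLike.mem_coe] at hb
      induction hb using Submodule.span_induction with
      | mem b hbS => exact Submodule.subset_span ⟨x, hx, b, hbS, rfl⟩
      | zero =>
        show fL x 0 ∈ (M : Set K)
        simpa using M.zero_mem
      | add a b _ _ ha hb =>
        show fL x (a + b) ∈ (M : Set K)
        rw [map_add]
        exact M.add_mem ha hb
      | smul c a _ ha =>
        show fL x (c • a) ∈ (M : Set K)
        rw [map_smul]
        exact M.smul_mem c ha
    exact map_mem_closure (fL x).continuous hz hmaps
  have step2 : ∀ x ∈ Submodule.span ℂ SA, ∀ z, f x z ∈ M.topologicalClosure := by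
    intro x hx z
    induction hx using Submodule.span_induction with
    | mem a haS => exact step1 a haS z
    | zero =>
      have : f 0 z = 0 := (hlin' z).map_zero
      rw [this]; exact M.topologicalClosure.zero_mem
    | add a b _ _ ha hb =>
      have : f (a + b) z = f a z + f b z := (hlin' z).map_add a b
      rw [this]; exact M.topologicalClosure.add_mem ha hb
    | smul c a _ ha =>
      have : f (c • a) z = c • f a z := (hlin' z).map_smul c a
      rw [this]; exact M.topologicalClosure.smul_mem c ha
  have key : ∀ x z, f x z ∈ M.topologicalClosure := by
    intro x z
    have hx : x ∈ closure ((Submodule.span ℂ SA : Submodule ℂ A) : Set A) := hSA x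
    have hmaps : Set.MapsTo (fR z) ((Submodule.span ℂ SA : Submodule ℂ A) : Set A)
        (M.topologicalClosure : Set K) := by
      intro a ha
      rw [SetLike.mem_coe] at ha
      exact step2 a ha z
    have := map_mem_closure (fR z).continuous hx hmaps
    rwa [Submodule.topologicalClosure_coe, closure_closure, ← Submodule.topologicalClosure_coe,
      SetLike.mem_coe] at this
  have hle : Submodule.span ℂ {k : K | ∃ x z, f x z = k} ≤ M.topologicalClosure := by
    rw [Submodule.span_le]
    rintro k ⟨x, z, rfl⟩
    exact key x z
  intro k
  have hk : k ∈ closure ((Submodule.span ℂ {k : K | ∃ x z, f x z = k}) : Set K) := hd k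
  have : closure ((Submodule.span ℂ {k : K | ∃ x z, f x z = k}) : Set K)
      ⊆ (M.topologicalClosure : Set K) :=
    closure_minimal hle M.isClosed_topologicalClosure
  exact this hk

/-- If a continuous linear map preserves inner products on a set with dense span,
it preserves them everywhere. -/
lemma aux_iso' {K : Type*} [NormedAddCommGroup K] [InnerProductSpace ℂ K]
    (T : K →L[ℂ] K) (S : Set K)
    (hS : Dense ((Submodule.span ℂ S : Submodule ℂ K) : Set K))
    (hT : ∀ a ∈ S, ∀ b ∈ S, ⟪T a, T b⟫_ℂ = ⟪a, b⟫_ℂ) :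
    ∀ k k', ⟪T k, T k'⟫_ℂ = ⟪k, k'⟫_ℂ := by
  have step1 : ∀ a ∈ S, ∀ k, ⟪T a, T k⟫_ℂ = ⟪a, k⟫_ℂ := by
    intro a ha k
    have : ((innerSL ℂ (T a)).comp T) = innerSL ℂ a :=
      ContinuousLinearMap.ext_on hS (fun b hb => by simpa using hT a ha b hb)
    simpa using DFunLike.congr_fun this k
  intro k k'
  have : ((innerSL ℂ (T k)).comp T) = innerSL ℂ k := by
    apply ContinuousLinearMap.ext_on hS
    intro a ha
    simp only [ContinuousLinearMap.comp_apply, innerSL_apply_apply]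
    rw [← inner_conj_symm, step1 a ha k, inner_conj_symm]
  simpa using DFunLike.congr_fun this k'

end Aux

theorem left_right_dilation_unitary_group
    (E : ℝ≥0 → Type*) [∀ t, NormedAddCommGroup (E t)] [∀ t, InnerProductSpace ℂ (E t)]
    [∀ t, CompleteSpace (E t)]
    (m : ∀ s t, E s → E t → E (s + t))
    (hm_lin : ∀ s t (x : E s), IsLinearMap ℂ (m s t x))
    (hm_lin' : ∀ s t (y : E t), IsLinearMap ℂ (fun x => m s t x y))
    (hm_iso : ∀ s t (x x' : E s) (y y' : E t),
      ⟪m s t x y, m s t x' y'⟫_ℂ = ⟪x, x'⟫_ℂ * ⟪y, y'⟫_ℂ)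
    (hm_dense : ∀ s t, Dense (↑(Submodule.span ℂ
      {z : E (s + t) | ∃ x y, m s t x y = z}) : Set (E (s + t))))
    (hm_assoc : ∀ r s t (x : E r) (y : E s) (z : E t),
      cast (congrArg E (add_assoc r s t)) (m (r + s) t (m r s x y) z)
        = m r (s + t) x (m s t y z))
    (one : E 0) (hone : ⟪one, one⟫_ℂ = 1)
    (honedim : ∀ x : E 0, x = ⟪one, x⟫_ℂ • one)     -- `E 0 = ℂ`
    (hu00 : cast (congrArg E (zero_add (0 : ℝ≥0))) (m 0 0 one one) = one)
    -- the left dilation `(v t : L ⊗ E t → L)`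
    (L : Type*) [NormedAddCommGroup L] [InnerProductSpace ℂ L] [CompleteSpace L]
    (hL : ∃ x : L, x ≠ 0)
    (v : ∀ t, L → E t → L)
    (hv_lin : ∀ t (x : L), IsLinearMap ℂ (v t x))
    (hv_lin' : ∀ t (y : E t), IsLinearMap ℂ (fun x => v t x y))
    (hv_iso : ∀ t (x x' : L) (y y' : E t),
      ⟪v t x y, v t x' y'⟫_ℂ = ⟪x, x'⟫_ℂ * ⟪y, y'⟫_ℂ)
    (hv_dense : ∀ t, Dense (↑(Submodule.span ℂ {z : L | ∃ x y, v t x y = z}) : Set L))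
    (hv_assoc : ∀ s t (x : L) (ys : E s) (yt : E t),
      v t (v s x ys) yt = v (s + t) x (m s t ys yt))
    -- the right dilation `(w t : E t ⊗ R → R)`
    (R : Type*) [NormedAddCommGroup R] [InnerProductSpace ℂ R] [CompleteSpace R]
    (hR : ∃ z : R, z ≠ 0)
    (w : ∀ t, E t → R → R)
    (hw_lin : ∀ t (y : E t), IsLinearMap ℂ (w t y))
    (hw_lin' : ∀ t (z : R), IsLinearMap ℂ (fun y => w t y z))
    (hw_iso : ∀ t (y y' : E t) (z z' : R),
      ⟪w t y z, w t y' z'⟫_ℂ = ⟪y, y'⟫_ℂ * ⟪z, z'⟫_ℂ)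
    (hw_dense : ∀ t, Dense (↑(Submodule.span ℂ {z : R | ∃ y z', w t y z' = z}) : Set R))
    (hw_assoc : ∀ t s (yt : E t) (ys : E s) (z : R),
      w t yt (w s ys z) = w (t + s) (m t s yt ys) z)
    -- the Hilbert space `K = L ⊗ R`
    (K : Type*) [NormedAddCommGroup K] [InnerProductSpace ℂ K] [CompleteSpace K]
    (τ : L → R → K)
    (hτ_lin : ∀ (x : L), IsLinearMap ℂ (τ x))
    (hτ_lin' : ∀ (z : R), IsLinearMap ℂ (fun x => τ x z))
    (hτ_iso : ∀ (x x' : L) (z z' : R), ⟪τ x z, τ x' z'⟫_ℂ = ⟪x, x'⟫_ℂ * ⟪z, z'⟫_ℂ)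
    (hτ_dense : Dense (↑(Submodule.span ℂ {k : K | ∃ x z, τ x z = k}) : Set K))
    -- the operators `u t = (v t ⊗ id_R)(id_L ⊗ (w t)*)`
    (u : ∀ _ : ℝ≥0, K →L[ℂ] K)
    (hu : ∀ t (x : L) (yt : E t) (z : R), u t (τ x (w t yt z)) = τ (v t x yt) z) :
    (∀ t, Function.Surjective (u t)) ∧ (∀ t (k : K), ‖u t k‖ = ‖k‖) ∧
      (∀ s t, (u s).comp (u t) = u (t + s)) ∧ u 0 = ContinuousLinearMap.id ℂ K := by
  -- transporting the first index of `v` and `w` along equalities of indices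
  have cast_v : ∀ (s t : ℝ≥0) (h : s = t) (x : L) (y : E s),
      v t x (cast (congrArg E h) y) = v s x y := by
    intro s t h; subst h; intro x y; rfl
  have cast_w : ∀ (s t : ℝ≥0) (h : s = t) (y : E s) (z : R),
      w t (cast (congrArg E h) y) z = w s y z := by
    intro s t h; subst h; intro y z; rfl
  -- the sets on which `u t` is characterized, and their density
  have hdense_wt : ∀ t : ℝ≥0, Dense ((Submodule.span ℂ
      {k : K | ∃ x ∈ (Set.univ : Set L), ∃ z ∈ {r : R | ∃ y z', w t y z' = r}, τ x z = k}) :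
      Set K) := by
    intro t
    exact aux_dense' τ hτ_lin hτ_lin' hτ_iso Set.univ _ aux_span_univ_dense' (hw_dense t)
      hτ_dense
  -- `u t` preserves inner products
  have hinner : ∀ t (k k' : K), ⟪u t k, u t k'⟫_ℂ = ⟪k, k'⟫_ℂ := by
    intro t
    apply aux_iso' (u t) _ (hdense_wt t)
    rintro a ⟨x, -, z, ⟨y, z1, rfl⟩, rfl⟩ b ⟨x', -, z', ⟨y', z1', rfl⟩, rfl⟩
    rw [hu, hu, hτ_iso, hτ_iso, hv_iso, hw_iso]
    ring
  have hnorm : ∀ t (k : K), ‖u t k‖ = ‖k‖ := by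
    intro t k
    have h := hinner t k k
    rw [@norm_eq_sqrt_re_inner ℂ, @norm_eq_sqrt_re_inner ℂ, h]
  -- surjectivity
  have hsurj : ∀ t, Function.Surjective (u t) := by
    intro t
    have hisoT : Isometry (u t) :=
      AddMonoidHomClass.isometry_of_norm (u t) (hnorm t)
    have hclosed : IsClosed (Set.range (u t)) := hisoT.isClosedEmbedding.isClosed_range
    have hdense2 : Dense ((Submodule.span ℂ
        {k : K | ∃ x ∈ {x : L | ∃ a b, v t a b = x}, ∃ z ∈ (Set.univ : Set R), τ x z = k}) :
        Set K) :=
      aux_dense' τ hτ_lin hτ_lin' hτ_iso _ Set.univ (hv_dense t) aux_span_univ_dense' hτ_dense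
    intro k
    have hsub : ((Submodule.span ℂ
        {k : K | ∃ x ∈ {x : L | ∃ a b, v t a b = x}, ∃ z ∈ (Set.univ : Set R), τ x z = k}) :
        Set K) ⊆ Set.range (u t) := by
      have : {k : K | ∃ x ∈ {x : L | ∃ a b, v t a b = x}, ∃ z ∈ (Set.univ : Set R), τ x z = k}
          ⊆ (LinearMap.range ((u t) : K →ₗ[ℂ] K) : Set K) := by
        rintro k ⟨x, ⟨a, b, rfl⟩, z, -, rfl⟩
        exact ⟨τ a (w t b z), hu t a b z⟩
      intro x hx
      rw [SetLike.mem_coe] at hx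
      have hx' : x ∈ LinearMap.range ((u t) : K →ₗ[ℂ] K) := by
        have hle := Submodule.span_le.mpr this
        exact hle hx
      obtain ⟨a, ha⟩ := hx'
      exact ⟨a, ha⟩
    have : k ∈ closure (Set.range (u t)) :=
      closure_mono hsub (hdense2 k)
    rwa [hclosed.closure_eq] at this
  refine ⟨hsurj, hnorm, ?_, ?_⟩
  · -- the group law
    intro s t
    have hd1 : Dense ((Submodule.span ℂ
        {r : R | ∃ y ∈ (Set.univ : Set (E t)), ∃ z ∈ {r : R | ∃ y' z', w s y' z' = r},
          w t y z = r}) : Set R) :=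
      aux_dense' (w t) (hw_lin t) (hw_lin' t) (hw_iso t) Set.univ _ aux_span_univ_dense'
        (hw_dense s) (hw_dense t)
    have hd2 : Dense ((Submodule.span ℂ
        {k : K | ∃ x ∈ (Set.univ : Set L), ∃ z ∈
          {r : R | ∃ y ∈ (Set.univ : Set (E t)), ∃ z ∈ {r : R | ∃ y' z', w s y' z' = r},
            w t y z = r}, τ x z = k}) : Set K) :=
      aux_dense' τ hτ_lin hτ_lin' hτ_iso Set.univ _ aux_span_univ_dense' hd1 hτ_dense
    apply ContinuousLinearMap.ext_on hd2
    rintro k ⟨x, -, z, ⟨y, -, z', ⟨y', z'', rfl⟩, rfl⟩, rfl⟩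
    show (u s) ((u t) (τ x (w t y (w s y' z'')))) = (u (t + s)) (τ x (w t y (w s y' z'')))
    rw [hu t x y (w s y' z''), hu s (v t x y) y' z'', hv_assoc t s x y y',
      hw_assoc t s y y' z'', hu (t + s)]
  · -- `u 0 = id`
    have Piso : ∀ a b : L, ⟪v 0 a one, v 0 b one⟫_ℂ = ⟪a, b⟫_ℂ := by
      intro a b; rw [hv_iso, hone, mul_one]
    have hP : ∀ x : L, v 0 (v 0 x one) one = v 0 x one := by
      intro x
      rw [hv_assoc 0 0 x one one, ← cast_v (0 + 0) 0 (zero_add 0) x (m 0 0 one one), hu00]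
    have hv0 : ∀ x : L, v 0 x one = x := by
      intro x
      apply ext_inner_right ℂ
      intro y
      calc ⟪v 0 x one, y⟫_ℂ = ⟪v 0 (v 0 x one) one, v 0 y one⟫_ℂ := (Piso _ _).symm
        _ = ⟪v 0 x one, v 0 y one⟫_ℂ := by rw [hP]
        _ = ⟪x, y⟫_ℂ := Piso _ _
    have Qiso : ∀ a b : R, ⟪w 0 one a, w 0 one b⟫_ℂ = ⟪a, b⟫_ℂ := by
      intro a b; rw [hw_iso, hone, one_mul]
    have hQ : ∀ z : R, w 0 one (w 0 one z) = w 0 one z := by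
      intro z
      rw [hw_assoc 0 0 one one z, ← cast_w (0 + 0) 0 (zero_add 0) (m 0 0 one one) z, hu00]
    have hw0 : ∀ z : R, w 0 one z = z := by
      intro z
      apply ext_inner_right ℂ
      intro y
      calc ⟪w 0 one z, y⟫_ℂ = ⟪w 0 one (w 0 one z), w 0 one y⟫_ℂ := (Qiso _ _).symm
        _ = ⟪w 0 one z, w 0 one y⟫_ℂ := by rw [hQ]
        _ = ⟪z, y⟫_ℂ := Qiso _ _
    apply ContinuousLinearMap.ext_on hτ_dense
    rintro k ⟨x, z, rfl⟩
    have h := hu 0 x one z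
    rw [hw0, hv0] at h
    simpa using h
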